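/- If X is a finite connected graph, then the smallest nonzero eigenvalue λ₁ of the zeroth Laplace operator Δ₀ = c₁ ∘ c₁* satisfies λ₁ ≥ 1/(diam(X)·vol(X)). -/

import Mathlib

open scoped RealInnerProductSpace

variable {V E : Type*}

noncomputable def c1 [Fintype E] [DecidableEq V] (v0 v1 : E → V) :
    EuclideanSpace ℝ E →ₗ[ℝ] EuclideanSpace ℝ V where
  toFun a := WithLp.toLp 2 fun v =>
    (∑ e ∈ Finset.univ.filter (fun e => v1 e = v), a e)
      - (∑ e ∈ Finset.univ.filter (fun e => v0 e = v), a e)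
  map_add' a b := by
    ext v
    simp [PiLp.add_apply, Finset.sum_add_distrib]
    ring
  map_smul' c a := by
    ext v
    simp [PiLp.smul_apply, smul_eq_mul, ← Finset.mul_sum, mul_sub]

/-- Spectral density function of a linear map of inner product spaces. -/
noncomputable def sdf {V W : Type*} [NormedAddCommGroup V] [InnerProductSpace ℝ V]
    [NormedAddCommGroup W] [InnerProductSpace ℝ W]
    (f : V →ₗ[ℝ] W) (lam : ℝ) : ℕ :=
  sSup {n : ℕ | ∃ U : Submodule ℝ V, Module.finrank ℝ U = n ∧ ∀ v ∈ U, ‖f v‖ ≤ lam * ‖v‖}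

/-- Degree of a vertex in a finite directed multigraph (loops count twice). -/
def vdeg [Fintype E] [DecidableEq V] (v0 v1 : E → V) (v : V) : ℕ :=
  (Finset.univ.filter fun e => v0 e = v).card + (Finset.univ.filter fun e => v1 e = v).card

/-- Maximal vertex degree of a finite multigraph. -/
def maxDeg [Fintype V] [Fintype E] [DecidableEq V] (v0 v1 : E → V) : ℕ :=
  Finset.univ.sup (vdeg v0 v1)

/-- The simple graph underlying a directed multigraph. -/
def supportGraph (v0 v1 : E → V) : SimpleGraph V where
  Adj u w := u ≠ w ∧ ∃ e, (v0 e = u ∧ v1 e = w) ∨ (v0 e = w ∧ v1 e = u)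
  symm := by
    constructor
    rintro u w ⟨h, e, he⟩
    exact ⟨h.symm, e, he.symm⟩
  loopless := by constructor; rintro u ⟨h, _⟩; exact h rfl

/- ### Auxiliary material -/

/-- The coboundary map, explicitly. -/
noncomputable def d1 [Fintype E] [DecidableEq V] (v0 v1 : E → V) :
    EuclideanSpace ℝ V →ₗ[ℝ] EuclideanSpace ℝ E where
  toFun g := WithLp.toLp 2 fun e => g (v1 e) - g (v0 e)
  map_add' g h := by ext e; simp [PiLp.add_apply]; ring
  map_smul' c g := by ext e; simp [PiLp.smul_apply, smul_eq_mul]; ring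

lemma sum_fiber_eq [Fintype V] [Fintype E] [DecidableEq V] (w : E → V) (F : E → ℝ) :
    ∑ v : V, ∑ e ∈ Finset.univ.filter (fun e => w e = v), F e = ∑ e : E, F e :=
  Finset.sum_fiberwise Finset.univ w F

lemma d1_eq_adjoint [Fintype V] [Fintype E] [DecidableEq V] (v0 v1 : E → V) :
    d1 v0 v1 = LinearMap.adjoint (c1 v0 v1) := by
  rw [LinearMap.eq_adjoint_iff]
  intro g a
  simp only [d1, c1, LinearMap.coe_mk, AddHom.coe_mk, PiLp.toLp_apply, PiLp.inner_apply, RCLike.inner_apply,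
    conj_trivial]
  have h1 : ∀ (w : E → V), ∑ v : V, ∑ e ∈ Finset.univ.filter (fun e => w e = v), g v * a e
      = ∑ e : E, g (w e) * a e := by
    intro w
    rw [← sum_fiber_eq w (fun e => g (w e) * a e)]
    refine Finset.sum_congr rfl fun v _ => Finset.sum_congr rfl fun e he => ?_
    simp only [Finset.mem_filter] at he
    rw [he.2]
  conv_lhs => enter [2, e]; rw [mul_comm]
  conv_rhs => enter [2, v]; rw [mul_comm]
  calc ∑ e : E, (g (v1 e) - g (v0 e)) * a e
      = (∑ e : E, g (v1 e) * a e) - ∑ e : E, g (v0 e) * a e := by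
        rw [← Finset.sum_sub_distrib]; congr 1; funext e; ring
    _ = ∑ v : V, g v * ((∑ e ∈ Finset.univ.filter (fun e => v1 e = v), a e)
          - ∑ e ∈ Finset.univ.filter (fun e => v0 e = v), a e) := by
        rw [← h1 v1, ← h1 v0, ← Finset.sum_sub_distrib]
        congr 1; funext v
        rw [mul_sub, Finset.mul_sum, Finset.mul_sum]

lemma walk_telescope {G : SimpleGraph V} (f : V → ℝ) {u w : V} (p : G.Walk u w) :
    (p.darts.map (fun d => f d.toProd.1 - f d.toProd.2)).sum = f u - f w := by
  induction p with
  | nil => simp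
  | cons h p ih =>
    simp only [SimpleGraph.Walk.darts_cons, List.map_cons, List.sum_cons, ih]
    ring

theorem list_sq_sum_le (l : List ℝ) : l.sum ^ 2 ≤ l.length * (l.map (fun x => x ^ 2)).sum := by
  induction l with
  | nil => simp
  | cons a l ih =>
    simp only [List.sum_cons, List.length_cons, List.map_cons, Nat.cast_add, Nat.cast_one]
    have h0 : (0:ℝ) ≤ (l.map (fun x => x ^ 2)).sum := by
      apply List.sum_nonneg; intro x hx
      simp only [List.mem_map] at hx; obtain ⟨y, _, rfl⟩ := hx; positivity
    have hn : (0:ℝ) ≤ (l.length : ℝ) := by positivity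
    rcases List.eq_nil_or_concat l with rfl | _
    · simp
    · have hn1 : (1:ℝ) ≤ (l.length : ℝ) := by
        have : 1 ≤ l.length := by
          rcases l with _ | _ <;> simp_all [List.length]
        exact_mod_cast this
      nlinarith [ih, sq_nonneg ((l.length : ℝ) * a - l.sum), mul_nonneg hn h0, sq_nonneg a,
        sq_nonneg l.sum]

set_option maxHeartbeats 1000000

/-- Estimate on the first non-trivial eigenvalue of the graph Laplacian:
every nonzero eigenvalue of Δ₀ = c₁ ∘ c₁* of a finite connected graph is at least
1/(diam(X) · vol(X)). -/
theorem eigenvalue_lower_bound {V E : Type*} [Fintype V] [Fintype E] [DecidableEq V]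
    (v0 v1 : E → V) (hc : (supportGraph v0 v1).Connected) (mu : ℝ)
    (hmu : Module.End.HasEigenvalue ((c1 v0 v1) ∘ₗ LinearMap.adjoint (c1 v0 v1)) mu)
    (hne : mu ≠ 0) :
    1 / (((supportGraph v0 v1).diam : ℝ) * (∑ v : V, vdeg v0 v1 v)) ≤ mu := by
  classical
  haveI : DecidableEq E := Classical.decEq E
  set G := supportGraph v0 v1 with hG
  obtain ⟨f, hf⟩ := hmu.exists_hasEigenvector
  have hfne : f ≠ 0 := hf.2
  have hAdj : LinearMap.adjoint (c1 v0 v1) = d1 v0 v1 := (d1_eq_adjoint v0 v1).symm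
  have happly : (c1 v0 v1) ((d1 v0 v1) f) = mu • f := by
    have := hf.apply_eq_smul
    rwa [LinearMap.comp_apply, hAdj] at this
  -- basic sums
  set F : ℝ := ∑ v : V, f v * f v with hFdef
  set Q : ℝ := ∑ e : E, ((d1 v0 v1) f e) ^ 2 with hQdef
  have hinner : ∀ x : EuclideanSpace ℝ V, ⟪(c1 v0 v1) ((d1 v0 v1) f), x⟫ = mu * ⟪f, x⟫ := by
    intro x
    rw [happly, real_inner_smul_left]
  -- mu * F = Q
  have hmuF : mu * F = Q := by
    have h1 : ⟪(c1 v0 v1) ((d1 v0 v1) f), f⟫ = mu * ⟪f, f⟫ := hinner f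
    have h2 : ⟪(c1 v0 v1) ((d1 v0 v1) f), f⟫ = ⟪(d1 v0 v1) f, (d1 v0 v1) f⟫ := by
      rw [real_inner_comm, ← LinearMap.adjoint_inner_left (c1 v0 v1) ((d1 v0 v1) f) f, hAdj]
    have h3 : ⟪f, f⟫ = F := by
      simp only [PiLp.inner_apply, RCLike.inner_apply, conj_trivial, hFdef]
    have h4 : ⟪(d1 v0 v1) f, (d1 v0 v1) f⟫ = Q := by
      simp only [PiLp.inner_apply, RCLike.inner_apply, conj_trivial, hQdef, sq]
    rw [h2, h4, h3] at h1
    exact h1.symm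
  have hQnonneg : 0 ≤ Q := Finset.sum_nonneg fun e _ => sq_nonneg _
  have hFpos : 0 < F := by
    have hne' : ∃ v, f v ≠ 0 := by
      by_contra h
      push_neg at h
      exact hfne (PiLp.ext fun v => by simp [h v])
    obtain ⟨v, hv⟩ := hne'
    have : (0:ℝ) < f v * f v := mul_self_pos.mpr hv
    exact lt_of_lt_of_le this
      (Finset.single_le_sum (fun i _ => mul_self_nonneg (f i)) (Finset.mem_univ v))
  have hmupos : 0 < mu := by
    rcases lt_or_ge 0 mu with h | h
    · exact h
    · exfalso
      have : mu * F ≤ 0 := mul_nonpos_of_nonpos_of_nonneg h hFpos.le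
      rcases lt_or_eq_of_le h with h' | h'
      · nlinarith
      · exact hne h'
  -- sum of f is zero
  have hsum0 : ∑ v : V, f v = 0 := by
    set o : EuclideanSpace ℝ V := WithLp.toLp 2 (fun _ => 1) with ho
    have hone : (d1 v0 v1) o = 0 := by
      ext e; simp [d1, ho]
    have h1 : ⟪(c1 v0 v1) ((d1 v0 v1) f), o⟫ = 0 := by
      rw [real_inner_comm, ← LinearMap.adjoint_inner_left (c1 v0 v1) ((d1 v0 v1) f) o, hAdj,
        hone, inner_zero_left]
    rw [hinner o] at h1
    have h2 : ⟪f, o⟫ = ∑ v : V, f v := by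
      simp [PiLp.inner_apply, RCLike.inner_apply, conj_trivial, ho]
    rw [h2] at h1
    rcases mul_eq_zero.mp h1 with h | h
    · exact absurd h hne
    · exact h
  set D : ℕ := G.diam with hD
  set S : ℕ := ∑ v : V, vdeg v0 v1 v with hS
  rcases Nat.eq_zero_or_pos (D * S) with hzero | hpos
  · have hz : (D : ℝ) * (S : ℝ) = 0 := by exact_mod_cast hzero
    rw [hz, div_zero]
    exact hmupos.le
  · have hDpos : 0 < D := by
      rcases Nat.eq_zero_or_pos D with h | h
      · rw [h] at hpos; simp at hpos
      · exact h
    have hSpos : 0 < S := by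
      rcases Nat.eq_zero_or_pos S with h | h
      · rw [h] at hpos; simp at hpos
      · exact h
    -- nontrivial V
    have hnontriv : Nontrivial V := by
      by_contra h
      rw [not_nontrivial_iff_subsingleton] at h
      have he0 : G.ediam = 0 := by
        rw [SimpleGraph.ediam_def]
        refine le_antisymm (iSup_le fun p => ?_) (zero_le)
        have hpp : p.1 = p.2 := Subsingleton.elim _ _
        rw [hpp, SimpleGraph.edist_self]
      have hd0 : D = 0 := by rw [hD, SimpleGraph.diam, he0]; rfl
      omega
    -- every vertex has degree at least one
    have hdeg : ∀ v : V, 1 ≤ vdeg v0 v1 v := by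
      intro v
      obtain ⟨w, hwv⟩ := exists_ne v
      obtain ⟨p⟩ := hc v w
      cases p with
      | nil => exact absurd rfl hwv.symm
      | cons h q =>
        obtain ⟨e, he⟩ := h.2
        rcases he with ⟨h1, h2⟩ | ⟨h1, h2⟩
        · have hmem : e ∈ Finset.univ.filter (fun e => v0 e = v) := by
            simp [h1]
          have := Finset.card_pos.mpr ⟨e, hmem⟩
          unfold vdeg; omega
        · have hmem : e ∈ Finset.univ.filter (fun e => v1 e = v) := by
            simp [h2]
          have := Finset.card_pos.mpr ⟨e, hmem⟩
          unfold vdeg; omega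
    have hVS : Fintype.card V ≤ S := by
      rw [hS, ← Finset.card_univ, Finset.card_eq_sum_ones]
      exact Finset.sum_le_sum fun v _ => hdeg v
    -- maximizer
    obtain ⟨u, -, hu⟩ := Finset.exists_max_image Finset.univ (fun v => (f v) ^ 2)
      ⟨Classical.arbitrary V, Finset.mem_univ _⟩
    have hfu : f u ≠ 0 := by
      intro h
      apply hfne
      ext v
      have h1 : (f v) ^ 2 ≤ 0 := by simpa [h] using hu v (Finset.mem_univ v)
      exact sq_eq_zero_iff.mp (le_antisymm h1 (sq_nonneg _))
    have hww : ∃ w : V, f u * f w ≤ 0 := by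
      by_contra h
      push_neg at h
      have hposum : 0 < ∑ v : V, f u * f v :=
        Finset.sum_pos (fun i _ => h i) ⟨u, Finset.mem_univ u⟩
      rw [← Finset.mul_sum, hsum0, mul_zero] at hposum
      exact lt_irrefl 0 hposum
    obtain ⟨w, hw⟩ := hww
    have step : (f u) ^ 2 ≤ (f u - f w) ^ 2 := by nlinarith [hw]
    -- shortest path from u to w
    obtain ⟨p, hp⟩ := hc.exists_walk_length_eq_dist u w
    have hpath : p.IsPath := p.isPath_of_length_eq_dist hp
    have hedtop : G.ediam ≠ ⊤ :=
      SimpleGraph.ediam_ne_top_of_diam_ne_zero (Nat.pos_iff_ne_zero.mp hDpos)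
    have hlen : p.length ≤ D := hp ▸ SimpleGraph.dist_le_diam hedtop
    -- choose an edge for each dart
    have hchoice : ∀ d : G.Dart, ∃ e : E,
        (v0 e = d.toProd.1 ∧ v1 e = d.toProd.2) ∨
        (v0 e = d.toProd.2 ∧ v1 e = d.toProd.1) := fun d => d.adj.2
    choose φ hφ using hchoice
    have hφsq : ∀ d : G.Dart,
        (f d.toProd.1 - f d.toProd.2) ^ 2 = ((d1 v0 v1) f (φ d)) ^ 2 := by
      intro d
      have hval : ((d1 v0 v1) f) (φ d) = f (v1 (φ d)) - f (v0 (φ d)) := rfl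
      rcases hφ d with ⟨h1, h2⟩ | ⟨h1, h2⟩ <;> rw [hval, h1, h2] <;> ring
    have hφedge : ∀ d : G.Dart, s(v0 (φ d), v1 (φ d)) = d.edge := by
      intro d
      rcases hφ d with ⟨h1, h2⟩ | ⟨h1, h2⟩
      · rw [h1, h2]; rfl
      · rw [h1, h2, Sym2.eq_swap]; rfl
    set l : List ℝ := p.darts.map (fun d => f d.toProd.1 - f d.toProd.2) with hl
    have hl1 : l.sum = f u - f w := walk_telescope f p
    have hl2 : l.length = p.length := by
      rw [hl, List.length_map, SimpleGraph.Walk.length_darts]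
    have hl3 : (l.map (fun x => x ^ 2)).sum ≤ Q := by
      rw [hl, List.map_map]
      have heq : (p.darts.map ((fun x => x ^ 2) ∘ (fun d => f d.toProd.1 - f d.toProd.2)))
          = (p.darts.map φ).map (fun e => ((d1 v0 v1) f e) ^ 2) := by
        rw [List.map_map]
        refine List.map_congr_left fun d _ => ?_
        simp only [Function.comp_apply]
        exact hφsq d
      rw [heq]
      have hnd : (p.darts.map φ).Nodup := by
        have h1 : ((p.darts.map φ).map (fun e => s(v0 e, v1 e))).Nodup := by
          rw [List.map_map]
          have heq2 : (p.darts.map ((fun e => s(v0 e, v1 e)) ∘ φ)) = p.edges := by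
            refine List.map_congr_left fun d _ => ?_
            simp only [Function.comp_apply]
            exact hφedge d
          rw [heq2]
          exact hpath.isTrail.edges_nodup
        exact h1.of_map _
      rw [← List.sum_toFinset _ hnd]
      refine Finset.sum_le_univ_sum_of_nonneg fun e => by positivity
    have hmapnonneg : (0:ℝ) ≤ (l.map (fun x => x ^ 2)).sum := by
      apply List.sum_nonneg
      intro x hx
      simp only [List.mem_map] at hx
      obtain ⟨y, _, rfl⟩ := hx
      positivity
    have hfu2 : (f u) ^ 2 ≤ (D : ℝ) * Q := by
      calc (f u) ^ 2 ≤ (f u - f w) ^ 2 := step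
        _ = l.sum ^ 2 := by rw [hl1]
        _ ≤ l.length * (l.map (fun x => x ^ 2)).sum := list_sq_sum_le l
        _ ≤ (D : ℝ) * Q := by
            apply mul_le_mul _ hl3 hmapnonneg (by positivity)
            rw [hl2]
            exact_mod_cast hlen
    have hFS : F ≤ (S : ℝ) * (f u) ^ 2 := by
      have h1 : F ≤ (Fintype.card V : ℝ) * (f u) ^ 2 := by
        rw [hFdef]
        calc ∑ v : V, f v * f v ≤ ∑ _v : V, (f u) ^ 2 := by
              refine Finset.sum_le_sum fun v _ => ?_
              have := hu v (Finset.mem_univ v)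
              nlinarith [this]
          _ = (Fintype.card V : ℝ) * (f u) ^ 2 := by
              rw [Finset.sum_const, Finset.card_univ, nsmul_eq_mul]
      have h2 : (Fintype.card V : ℝ) ≤ (S : ℝ) := by exact_mod_cast hVS
      nlinarith [sq_nonneg (f u), h1, h2]
    have hfinal : F ≤ (D : ℝ) * (S : ℝ) * (mu * F) := by
      rw [hmuF]
      calc F ≤ (S : ℝ) * (f u) ^ 2 := hFS
        _ ≤ (S : ℝ) * ((D : ℝ) * Q) := by
            exact mul_le_mul_of_nonneg_left hfu2 (by positivity)
        _ = (D : ℝ) * (S : ℝ) * Q := by ring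
    have hDSpos : (0:ℝ) < (D : ℝ) * (S : ℝ) := by
      have h1 : (0:ℝ) < (D:ℝ) := by exact_mod_cast hDpos
      have h2 : (0:ℝ) < (S:ℝ) := by exact_mod_cast hSpos
      positivity
    rw [div_le_iff₀ hDSpos]
    nlinarith [hfinal, hFpos, hmupos]
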